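/- Let m > 2 and let (η_i)_{i≥1} be independent identically distributed symmetric real random variables with P(|η₁| > x) = exp(−x^m) for all x > 0. Then sup_{n ≥ 1} sup_{p ≥ 2} [ (E| n^{−1/2} ∑_{i=1}^n η_i |^p)^{1/p} / p^{1/m} ] = ∞. That is, η₁ belongs to the space G_m = { centered η : sup_{p≥2} (E|η|^p)^{1/p}/p^{1/m} < ∞ }, but its CLT norm in G_m is infinite, so CLT(G_m) differs essentially from G_m. -/

import Mathlib

open MeasureTheory ProbabilityTheory ENNReal Finset
open Filter

/-- for `m > 2`, if `(ηᵢ)` are i.i.d. symmetric with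
`P(|η₁| > x) = exp(-x^m)` for `x > 0` (so `η₁ ∈ G_m`), then the `G_m` (CLT) norms of the
normalized sums blow up:
`sup_{n ≥ 1} sup_{p ≥ 2} (E|n^{-1/2}∑ηᵢ|^p)^{1/p} / p^{1/m} = ∞`. -/
theorem stmt_14 (m : ℝ) (hm : 2 < m)
    {Ω : Type*} [MeasurableSpace Ω] (P : Measure Ω) [IsProbabilityMeasure P]
    (η : ℕ → Ω → ℝ) (hmeas : ∀ i, Measurable (η i))
    (hindep : iIndepFun η P)
    (hid : ∀ i, IdentDistrib (η i) (η 0) P P)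
    (hsymm : IdentDistrib (η 0) (fun ω => -η 0 ω) P P)
    (htail : ∀ x : ℝ, 0 < x →
      P {ω | x < |η 0 ω|} = ENNReal.ofReal (Real.exp (-(x ^ m)))) :
    (⨆ (n : ℕ) (_ : 1 ≤ n), ⨆ (p : ℝ) (_ : 2 ≤ p),
        (∫⁻ ω, ENNReal.ofReal |(∑ i ∈ Finset.range n, η i ω) / Real.sqrt n| ^ p ∂P)
            ^ (1 / p) / ENNReal.ofReal (p ^ (1 / m)))
      = ⊤ := by
  set q : ℝ := Real.exp (-1) / 2 with hq_def
  have hq : 0 < q := by positivity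
  -- Step A : P (η 0 > 1) = ofReal q
  have hone : P (η 0 ⁻¹' Set.Ioi 1) = ENNReal.ofReal q := by
    have h1 : P {ω | (1:ℝ) < |η 0 ω|} = ENNReal.ofReal (Real.exp (-1)) := by
      have := htail 1 one_pos
      rwa [Real.one_rpow] at this
    have hswap : P (η 0 ⁻¹' Set.Ioi 1) = P (η 0 ⁻¹' Set.Iio (-1)) := by
      have h := hsymm.measure_mem_eq (s := Set.Ioi 1) measurableSet_Ioi
      rw [h]
      congr 1
      ext ω
      simp only [Set.mem_preimage, Set.mem_Ioi, Set.mem_Iio]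
      constructor <;> intro h' <;> linarith
    have hsplit : {ω | (1:ℝ) < |η 0 ω|}
        = (η 0 ⁻¹' Set.Ioi 1) ∪ (η 0 ⁻¹' Set.Iio (-1)) := by
      ext ω
      simp only [Set.mem_setOf_eq, Set.mem_union, Set.mem_preimage, Set.mem_Ioi, Set.mem_Iio,
        lt_abs, lt_neg]
    have hdisj : Disjoint (η 0 ⁻¹' Set.Ioi 1) (η 0 ⁻¹' Set.Iio (-1)) := by
      refine Set.disjoint_left.mpr fun ω h1' h2' => ?_
      simp only [Set.mem_preimage, Set.mem_Ioi, Set.mem_Iio] at h1' h2'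
      linarith
    have hmeas2 : MeasurableSet (η 0 ⁻¹' Set.Iio (-1)) := (hmeas 0) measurableSet_Iio
    have hadd : P (η 0 ⁻¹' Set.Ioi 1) + P (η 0 ⁻¹' Set.Iio (-1))
        = ENNReal.ofReal (Real.exp (-1)) := by
      rw [← measure_union hdisj hmeas2, ← hsplit, h1]
    rw [← hswap] at hadd
    have h2 : (2 : ℝ≥0∞) * P (η 0 ⁻¹' Set.Ioi 1) = ENNReal.ofReal (Real.exp (-1)) := by
      rw [two_mul]; exact hadd
    have : P (η 0 ⁻¹' Set.Ioi 1) = ENNReal.ofReal (Real.exp (-1)) / 2 :=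
      (ENNReal.eq_div_iff two_ne_zero ENNReal.ofNat_ne_top).mpr h2
    rw [this, hq_def, ENNReal.ofReal_div_of_pos two_pos, ENNReal.ofReal_ofNat]
  have hi : ∀ i, P (η i ⁻¹' Set.Ioi 1) = ENNReal.ofReal q := fun i => by
    exact ((hid i).measure_mem_eq measurableSet_Ioi).trans hone
  -- Step B : product bound for the intersection
  have hA : ∀ n : ℕ, P (⋂ i ∈ Finset.range n, η i ⁻¹' Set.Ioi 1) = ENNReal.ofReal q ^ n := by
    intro n
    rw [hindep.meas_biInter (S := Finset.range n)
      (fun i _ => ⟨Set.Ioi 1, measurableSet_Ioi, rfl⟩)]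
    simp [hi]
  -- main estimate: for n ≥ 2, the (n,p=n)-term is at least ofReal ((n:ℝ)^(1/2-1/m) * q)
  set α : ℝ := 1 / 2 - 1 / m with hα_def
  have hα : 0 < α := by
    have : 1 / m < 1 / 2 := by
      rw [div_lt_div_iff₀ (by linarith) (by norm_num)]
      linarith
    rw [hα_def]; linarith
  have key : ∀ n : ℕ, 2 ≤ n →
      ENNReal.ofReal ((n : ℝ) ^ α * q) ≤
        (∫⁻ ω, ENNReal.ofReal |(∑ i ∈ Finset.range n, η i ω) / Real.sqrt n| ^ (n : ℝ) ∂P)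
            ^ (1 / (n : ℝ)) / ENNReal.ofReal ((n : ℝ) ^ (1 / m)) := by
    intro n hn2
    have hn0 : (0:ℝ) < n := by positivity
    have hnne : (n:ℝ) ≠ 0 := ne_of_gt hn0
    set A : Set Ω := ⋂ i ∈ Finset.range n, η i ⁻¹' Set.Ioi 1 with hA_def
    have hAm : MeasurableSet A :=
      MeasurableSet.biInter (Finset.range n).countable_toSet
        (fun i _ => (hmeas i) measurableSet_Ioi)
    -- pointwise lower bound on A
    have hpt : ∀ ω ∈ A, Real.sqrt n ≤ |(∑ i ∈ Finset.range n, η i ω) / Real.sqrt n| := by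
      intro ω hω
      simp only [hA_def, Set.mem_iInter, Set.mem_preimage, Set.mem_Ioi] at hω
      have hsum : (n : ℝ) ≤ ∑ i ∈ Finset.range n, η i ω := by
        calc (n : ℝ) = ∑ _i ∈ Finset.range n, (1:ℝ) := by simp
        _ ≤ ∑ i ∈ Finset.range n, η i ω :=
            Finset.sum_le_sum fun i hi' => (hω i hi').le
      have hs : Real.sqrt n = (n : ℝ) / Real.sqrt n := (Real.div_sqrt).symm
      calc Real.sqrt n = (n:ℝ) / Real.sqrt n := hs
        _ ≤ (∑ i ∈ Finset.range n, η i ω) / Real.sqrt n := by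
            gcongr
        _ ≤ |(∑ i ∈ Finset.range n, η i ω) / Real.sqrt n| := le_abs_self _
    -- lintegral lower bound
    have hint : ENNReal.ofReal (Real.sqrt n) ^ (n:ℝ) * ENNReal.ofReal q ^ n ≤
        ∫⁻ ω, ENNReal.ofReal |(∑ i ∈ Finset.range n, η i ω) / Real.sqrt n| ^ (n : ℝ) ∂P := by
      rw [← hA n, ← hA_def, ← lintegral_indicator_const hAm]
      apply lintegral_mono
      intro ω
      by_cases hω : ω ∈ A
      · rw [Set.indicator_of_mem hω]
        exact ENNReal.rpow_le_rpow (ENNReal.ofReal_le_ofReal (hpt ω hω)) (by positivity)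
      · rw [Set.indicator_of_notMem hω]
        exact zero_le
    -- take rpow (1/n) and divide
    have hnum : (ENNReal.ofReal (Real.sqrt n) ^ (n:ℝ) * ENNReal.ofReal q ^ n) ^ (1/(n:ℝ))
        = ENNReal.ofReal (Real.sqrt n * q) := by
      rw [← ENNReal.rpow_natCast (ENNReal.ofReal q) n,
        ← ENNReal.mul_rpow_of_nonneg _ _ (by positivity : (0:ℝ) ≤ (n:ℝ)),
        ← ENNReal.rpow_mul, mul_one_div, div_self hnne, ENNReal.rpow_one,
        ENNReal.ofReal_mul (Real.sqrt_nonneg _)]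
    have step1 : ENNReal.ofReal (Real.sqrt n * q) ≤
        (∫⁻ ω, ENNReal.ofReal |(∑ i ∈ Finset.range n, η i ω) / Real.sqrt n| ^ (n : ℝ) ∂P)
          ^ (1 / (n : ℝ)) := by
      rw [← hnum]
      exact ENNReal.rpow_le_rpow hint (by positivity)
    have hfin : ENNReal.ofReal ((n:ℝ)^α * q)
        = ENNReal.ofReal (Real.sqrt n * q) / ENNReal.ofReal ((n : ℝ) ^ (1 / m)) := by
      rw [← ENNReal.ofReal_div_of_pos (by positivity)]
      congr 1
      rw [Real.sqrt_eq_rpow, hα_def, Real.rpow_sub hn0]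
      ring
    rw [hfin]
    exact ENNReal.div_le_div_right step1 _
  -- conclude the sup is ⊤
  apply ENNReal.eq_top_of_forall_nnreal_le
  intro r
  have h1 : Tendsto (fun n : ℕ => ((n:ℝ)) ^ α) atTop atTop :=
    (tendsto_rpow_atTop hα).comp tendsto_natCast_atTop_atTop
  have h2 : Tendsto (fun n : ℕ => ((n:ℝ)) ^ α * q) atTop atTop := h1.atTop_mul_const hq
  obtain ⟨n, hnr, hn2⟩ := ((h2.eventually_ge_atTop (r:ℝ)).and (eventually_ge_atTop 2)).exists
  have hr : (r : ℝ≥0∞) ≤ ENNReal.ofReal ((n:ℝ)^α * q) := by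
    rw [← ENNReal.ofReal_coe_nnreal]
    exact ENNReal.ofReal_le_ofReal hnr
  refine hr.trans ?_
  refine le_iSup_of_le n (le_iSup_of_le (by omega) (le_iSup_of_le (n:ℝ)
    (le_iSup_of_le ?_ (key n hn2))))
  exact_mod_cast hn2
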